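/- Let N ≥ 1, h = 20N², and let x, y ∈ [0, N], z = (h²+x²−y²)/(2h), r = √(y²+z²). For any real x' with |x − x'| ≥ 1, the distance from (x, y, z) to (x', 0, −1/2) is strictly greater than r + 1/2. Hence the ball of center (x,y,z) and radius r is disjoint from any ball of radius 1/2 centered at (x',0,−1/2). -/

import Mathlib

noncomputable def pt3 (a b c : ℝ) : EuclideanSpace ℝ (Fin 3) := WithLp.toLp 2 ![a, b, c]

theorem stmt_5 (N h x x' y z r : ℝ) (hN : 1 ≤ N) (hh : h = 20 * N ^ 2)
    (hx : x ∈ Set.Icc 0 N) (hy : y ∈ Set.Icc 0 N)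
    (hz : z = (h ^ 2 + x ^ 2 - y ^ 2) / (2 * h))
    (hr : r = Real.sqrt (y ^ 2 + z ^ 2))
    (hxx' : 1 ≤ |x - x'|) :
    dist (pt3 x y z) (pt3 x' 0 (-1/2)) > r + 1/2 ∧
    Disjoint (Metric.closedBall (pt3 x y z) r)
      (Metric.closedBall (pt3 x' 0 (-1/2)) (1/2)) := by
  obtain ⟨hx0, hxN⟩ := hx
  obtain ⟨hy0, hyN⟩ := hy
  have hN2 : (1:ℝ) ≤ N ^ 2 := by nlinarith
  have hhpos : 0 < h := by nlinarith
  have hzlb : 10 * N ^ 2 - 1 ≤ z := by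
    rw [hz, hh, le_div_iff₀ (by positivity)]
    nlinarith
  have hzpos : (0:ℝ) < z := by nlinarith
  have hrlt : r < z + 1 := by
    rw [hr, show z + 1 = Real.sqrt ((z+1)^2) by
      rw [Real.sqrt_sq (by linarith)]]
    apply Real.sqrt_lt_sqrt (by positivity)
    nlinarith
  have hr0 : 0 ≤ r := hr ▸ Real.sqrt_nonneg _
  have hr2 : r ^ 2 = y ^ 2 + z ^ 2 := by
    rw [hr, Real.sq_sqrt (by positivity)]
  have hxx2 : 1 ≤ (x - x') ^ 2 := by
    nlinarith [sq_abs (x - x'), sq_nonneg (|x - x'| - 1)]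
  have hdist : dist (pt3 x y z) (pt3 x' 0 (-1/2)) =
      Real.sqrt ((x - x') ^ 2 + y ^ 2 + (z + 1/2) ^ 2) := by
    rw [EuclideanSpace.dist_eq]
    congr 1
    simp [pt3, Fin.sum_univ_three, Real.dist_eq, sq_abs]
    ring
  have hmain : dist (pt3 x y z) (pt3 x' 0 (-1/2)) > r + 1/2 := by
    rw [hdist]
    rw [show r + 1/2 = Real.sqrt ((r + 1/2)^2) by
      rw [Real.sqrt_sq (by linarith)]]
    apply Real.sqrt_lt_sqrt (by positivity)
    nlinarith
  exact ⟨hmain, Metric.closedBall_disjoint_closedBall (by linarith)⟩
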